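/- Suppose n jobs are scheduled non-preemptively on a single machine by FIFO (first-in-first-out): job j has release time r_j ≥ 0 and processing time p_j ≥ 0, and whenever the machine is idle and there are released unprocessed jobs, it processes the one with the earliest release time. If for every pair of time points a ≤ b the total processing time of jobs released in the interval [a, b] is at most (b − a) + D for some D ≥ 0, then every job completes within D time units of its release time (i.e., maximum flow time ≤ D). -/
import Mathlib


open scoped Classical

/-- FIFO single-machine scheduling: `n` jobs with release times `r j ≥ 0` and
processing times `p j ≥ 0` are started non-preemptively at times `s j`.
The schedule is feasible (`hstart`, `hdisj`), starts jobs in nondecreasing order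
of release times (`hfifo`), and never idles while a released unstarted job
exists (`hbusy`).  If the total processing time of jobs released in any interval
`[a, b]` is at most `(b − a) + D`, then every job has flow time at most `D`. -/
theorem stmt_8 (n : ℕ) (r p s : Fin n → ℝ) (D : ℝ) (hD : 0 ≤ D)
    (hr : ∀ j, 0 ≤ r j) (hp : ∀ j, 0 ≤ p j)
    (hstart : ∀ j, r j ≤ s j)
    (hdisj : ∀ i j, i ≠ j → s i + p i ≤ s j ∨ s j + p j ≤ s i)
    (hfifo : ∀ i j, s i < s j → r i ≤ r j)
    (hbusy : ∀ j t, r j ≤ t → t < s j → ∃ i, s i ≤ t ∧ t < s i + p i)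
    (hbacklog : ∀ a b : ℝ, a ≤ b →
      ∑ j ∈ Finset.univ.filter (fun j => a ≤ r j ∧ r j ≤ b), p j ≤ (b - a) + D) :
    ∀ j, s j + p j - r j ≤ D := by
  intro j
  classical
  -- B : jobs i started no later than j such that the machine is busy on [s i, s j)
  set B : Finset (Fin n) := Finset.univ.filter
    (fun i => s i ≤ s j ∧ ∀ t, s i ≤ t → t < s j → ∃ k, s k ≤ t ∧ t < s k + p k) with hB
  have hBmem : ∀ i, i ∈ B ↔ s i ≤ s j ∧
      ∀ t, s i ≤ t → t < s j → ∃ k, s k ≤ t ∧ t < s k + p k := by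
    intro i; simp [hB]
  have hjB : j ∈ B := by
    rw [hBmem]
    exact ⟨le_rfl, fun t h1 h2 => absurd (lt_of_le_of_lt h1 h2) (lt_irrefl _)⟩
  obtain ⟨m, hmB, hmmin⟩ := B.exists_min_image s ⟨j, hjB⟩
  -- any element of B with minimal start time starts exactly at its release time
  have key : ∀ i ∈ B, s i ≤ s m → r i = s i := by
    intro i hiB hism
    by_contra hne
    have hlt : r i < s i := lt_of_le_of_ne (hstart i) hne
    obtain ⟨k, hk1, hk2⟩ := hbusy i (r i) le_rfl hlt
    have hiBp := (hBmem i).mp hiB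
    have hkB : k ∈ B := by
      rw [hBmem]
      constructor
      · linarith [hiBp.1]
      · intro t ht1 ht2
        rcases lt_or_ge t (s k + p k) with h | h
        · exact ⟨k, ht1, h⟩
        · rcases lt_or_ge t (s i) with h2 | h2
          · exact hbusy i t (by linarith) h2
          · exact hiBp.2 t h2 ht2
    have := hmmin k hkB
    linarith
  have hrm : r m = s m := key m hmB le_rfl
  set a := s m with ha
  have haj : a ≤ s j := ((hBmem m).mp hmB).1
  have hbusym := ((hBmem m).mp hmB).2
  have harj : a ≤ r j := by
    rcases lt_or_eq_of_le haj with h | h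
    · have := hfifo m j h; linarith
    · have := key j hjB (le_of_eq h.symm)
      linarith
  have claimB : ∀ i, a ≤ s i → s i ≤ s j → a ≤ r i := by
    intro i h1 h2
    rcases lt_or_eq_of_le h1 with h | h
    · have := hfifo m i h; linarith
    · have hiB : i ∈ B := by
        rw [hBmem]
        refine ⟨h2, fun t ht1 ht2 => hbusym t (h.le.trans ht1) ht2⟩
      have := key i hiB (le_of_eq h.symm)
      linarith
  set J : Finset (Fin n) := Finset.univ.filter
    (fun i => a ≤ s i ∧ s i ≤ s j ∧ r i ≤ r j) with hJ
  have hJmem : ∀ i, i ∈ J ↔ a ≤ s i ∧ s i ≤ s j ∧ r i ≤ r j := by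
    intro i; simp [hJ]
  have hcover : Set.Ico a (s j + p j) ⊆ ⋃ i ∈ J, Set.Ico (s i) (s i + p i) := by
    intro t ht
    simp only [Set.mem_Ico] at ht
    rcases lt_or_ge t (s j) with hts | hts
    · obtain ⟨k, hk1, hk2⟩ := hbusym t ht.1 hts
      have hask : a ≤ s k := by
        by_contra hlt
        push_neg at hlt
        have hkB : k ∈ B := by
          rw [hBmem]
          refine ⟨by linarith, ?_⟩
          intro t' h1 h2
          rcases lt_or_ge t' (s k + p k) with h | h
          · exact ⟨k, h1, h⟩
          · exact hbusym t' (by linarith) h2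
        have := hmmin k hkB; linarith
      have hkJ : k ∈ J := by
        rw [hJmem]
        exact ⟨hask, by linarith, hfifo k j (by linarith)⟩
      simp only [Set.mem_iUnion, Set.mem_Ico]
      exact ⟨k, hkJ, hk1, hk2⟩
    · have hjJ : j ∈ J := by rw [hJmem]; exact ⟨haj, le_rfl, le_rfl⟩
      simp only [Set.mem_iUnion, Set.mem_Ico]
      exact ⟨j, hjJ, hts, ht.2⟩
  -- measure argument: length of [a, s j + p j) is at most the total length of intervals in J
  have hmeas : s j + p j - a ≤ ∑ i ∈ J, p i := by
    have h1 : MeasureTheory.volume (Set.Ico a (s j + p j)) ≤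
        ∑ i ∈ J, MeasureTheory.volume (Set.Ico (s i) (s i + p i)) :=
      le_trans (MeasureTheory.measure_mono hcover)
        (MeasureTheory.measure_biUnion_finset_le J _)
    rw [Real.volume_Ico] at h1
    have h2 : ∑ i ∈ J, MeasureTheory.volume (Set.Ico (s i) (s i + p i)) =
        ENNReal.ofReal (∑ i ∈ J, p i) := by
      rw [ENNReal.ofReal_sum_of_nonneg (fun i _ => hp i)]
      apply Finset.sum_congr rfl
      intro i _
      rw [Real.volume_Ico]
      congr 1
      ring
    rw [h2] at h1
    have h3 := (ENNReal.ofReal_le_ofReal_iff (Finset.sum_nonneg (fun i _ => hp i))).mp h1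
    linarith
  have hsub : ∑ i ∈ J, p i ≤
      ∑ i ∈ Finset.univ.filter (fun i => a ≤ r i ∧ r i ≤ r j), p i := by
    apply Finset.sum_le_sum_of_subset_of_nonneg
    · intro i hi
      rw [hJmem] at hi
      simp only [Finset.mem_filter, Finset.mem_univ, true_and]
      exact ⟨claimB i hi.1 hi.2.1, hi.2.2⟩
    · intro i _ _; exact hp i
  have := hbacklog a (r j) harj
  linarith
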